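/- Under the trajectory setup, suppose there exists β ≥ 0 such that B(y)² ≤ β² r(y)² for all y ∈ ℝⁿ. Then |Ĵ(x(0)) − J| ≤ β·J. -/

import Mathlib

open Matrix Filter Topology

/-- Under the trajectory setup, if there is `β ≥ 0` with
`B(y)² ≤ β² r(y)²` for all `y`, then `|Ĵ(x(0)) − J| ≤ β J`. -/
theorem bellman_residual_cost_error_bound
    {n m : ℕ} (hn : 0 < n) (hm : 0 < m)
    (q : (Fin n → ℝ) → ℝ) (u : (Fin n → ℝ) → Fin m → ℝ)
    (f : (Fin n → ℝ) → Fin n → ℝ)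
    (R : (Fin n → ℝ) → Matrix (Fin m) (Fin m) ℝ)
    (G : (Fin n → ℝ) → Matrix (Fin n) (Fin m) ℝ)
    (hq : Continuous q) (hu : Continuous u) (hf : Continuous f)
    (hR : Continuous R) (hG : Continuous G)
    (hRpsd : ∀ y, (R y).PosSemidef)
    (hqnn : ∀ y, 0 ≤ q y)
    (Jhat : (Fin n → ℝ) → ℝ) (gradJ : (Fin n → ℝ) → Fin n → ℝ)
    (hJd : ∀ y, HasFDerivAt Jhat
      (∑ i, gradJ y i • (ContinuousLinearMap.proj i : (Fin n → ℝ) →L[ℝ] ℝ)) y)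
    (hgradc : Continuous gradJ)
    (hJ0 : Jhat 0 = 0)
    (r : (Fin n → ℝ) → ℝ)
    (hr : ∀ y, r y = q y + (1 / 2) * (u y ⬝ᵥ (R y *ᵥ u y)))
    (B : (Fin n → ℝ) → ℝ)
    (hB : ∀ y, B y = r y + gradJ y ⬝ᵥ (f y + G y *ᵥ u y))
    (x : ℝ → Fin n → ℝ)
    (hx : ∀ t : ℝ, 0 ≤ t → HasDerivAt x (f (x t) + G (x t) *ᵥ u (x t)) t)
    (hxlim : Tendsto x atTop (𝓝 0))
    (J : ℝ)
    (hJ : Tendsto (fun T => ∫ t in (0:ℝ)..T, r (x t)) atTop (𝓝 J))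
    (β : ℝ) (hβ : 0 ≤ β)
    (hBr : ∀ y : Fin n → ℝ, B y ^ 2 ≤ β ^ 2 * r y ^ 2) :
    |Jhat (x 0) - J| ≤ β * J := by

  -- nonnegativity of r
  have hrnn : ∀ y, 0 ≤ r y := by
    intro y
    have h2 := (hRpsd y).dotProduct_mulVec_nonneg (u y)
    simp only [RCLike.re_to_real, star_trivial] at h2
    rw [hr y]
    have : (0:ℝ) ≤ (1/2) * (u y ⬝ᵥ (R y *ᵥ u y)) := by positivity
    linarith [hqnn y]
  -- pointwise bound |B| ≤ β r
  have hBabs : ∀ y, |B y| ≤ β * r y := by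
    intro y
    nlinarith [hBr y, sq_abs (B y), abs_nonneg (B y), mul_nonneg hβ (hrnn y), hrnn y]
  -- continuity helpers
  have huc : ∀ i, Continuous fun y => u y i := fun i => (continuous_apply i).comp hu
  have hRc : ∀ i j, Continuous fun y => R y i j := fun i j =>
    (continuous_apply j).comp ((continuous_apply i).comp hR)
  have hGc : ∀ i j, Continuous fun y => G y i j := fun i j =>
    (continuous_apply j).comp ((continuous_apply i).comp hG)
  have hfc : ∀ i, Continuous fun y => f y i := fun i => (continuous_apply i).comp hf
  have hgc : ∀ i, Continuous fun y => gradJ y i := fun i => (continuous_apply i).comp hgradc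
  have hrc : Continuous r := by
    have : Continuous fun y => q y + (1/2) * (u y ⬝ᵥ (R y *ᵥ u y)) := by
      apply hq.add
      apply Continuous.mul continuous_const
      simp only [dotProduct, Matrix.mulVec, dotProduct]
      exact continuous_finset_sum _ fun i _ => (huc i).mul
        (continuous_finset_sum _ fun j _ => (hRc i j).mul (huc j))
    simpa only [← hr] using this
  have hBc : Continuous B := by
    have : Continuous fun y => r y + gradJ y ⬝ᵥ (f y + G y *ᵥ u y) := by
      apply hrc.add
      simp only [dotProduct, Matrix.mulVec, dotProduct, Pi.add_apply]
      exact continuous_finset_sum _ fun i _ => (hgc i).mul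
        ((hfc i).add (continuous_finset_sum _ fun j _ => (hGc i j).mul (huc j)))
    simpa only [← hB] using this
  -- continuity of x at nonneg times
  have hxct : ∀ t : ℝ, 0 ≤ t → ContinuousAt x t := fun t ht => (hx t ht).continuousAt
  have hxon : ∀ T : ℝ, ContinuousOn x (Set.Icc 0 T) := fun T =>
    fun t ht => (hxct t ht.1).continuousWithinAt
  -- integrabilities
  have hrint : ∀ T : ℝ, 0 ≤ T → IntervalIntegrable (fun t => r (x t)) MeasureTheory.volume 0 T := by
    intro T hT
    apply ContinuousOn.intervalIntegrable
    rw [Set.uIcc_of_le hT]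
    exact hrc.comp_continuousOn (hxon T)
  have hBint : ∀ T : ℝ, 0 ≤ T → IntervalIntegrable (fun t => B (x t)) MeasureTheory.volume 0 T := by
    intro T hT
    apply ContinuousOn.intervalIntegrable
    rw [Set.uIcc_of_le hT]
    exact hBc.comp_continuousOn (hxon T)
  -- derivative of Jhat ∘ x
  have hphi : ∀ t : ℝ, 0 ≤ t → HasDerivAt (fun s => Jhat (x s)) (B (x t) - r (x t)) t := by
    intro t ht
    have h1 := (hJd (x t)).comp_hasDerivAt t (hx t ht)
    have h2 : (∑ i, gradJ (x t) i • (ContinuousLinearMap.proj i : (Fin n → ℝ) →L[ℝ] ℝ))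
        (f (x t) + G (x t) *ᵥ u (x t)) = B (x t) - r (x t) := by
      rw [hB (x t)]
      simp [ContinuousLinearMap.sum_apply, ContinuousLinearMap.smul_apply,
        ContinuousLinearMap.proj_apply, dotProduct, smul_eq_mul]
    rw [h2] at h1
    exact h1
  -- FTC
  have key : ∀ T : ℝ, 0 ≤ T →
      ∫ t in (0:ℝ)..T, B (x t) = Jhat (x T) - Jhat (x 0) + ∫ t in (0:ℝ)..T, r (x t) := by
    intro T hT
    have hftc : ∫ t in (0:ℝ)..T, (B (x t) - r (x t)) = Jhat (x T) - Jhat (x 0) := by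
      apply intervalIntegral.integral_eq_sub_of_hasDerivAt
      · intro t htm
        rw [Set.uIcc_of_le hT] at htm
        exact hphi t htm.1
      · exact (hBint T hT).sub (hrint T hT)
    have := intervalIntegral.integral_sub (hBint T hT) (hrint T hT)
    rw [this] at hftc
    linarith
  -- bound on |∫ B|
  have hbound : ∀ T : ℝ, 0 ≤ T →
      |∫ t in (0:ℝ)..T, B (x t)| ≤ β * ∫ t in (0:ℝ)..T, r (x t) := by
    intro T hT
    have h1 : |∫ t in (0:ℝ)..T, B (x t)| ≤ ∫ t in (0:ℝ)..T, |B (x t)| :=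
      intervalIntegral.abs_integral_le_integral_abs hT
    have h2 : ∫ t in (0:ℝ)..T, |B (x t)| ≤ ∫ t in (0:ℝ)..T, β * r (x t) := by
      apply intervalIntegral.integral_mono_on hT ((hBint T hT).abs)
        ((hrint T hT).const_mul β)
      intro t _
      exact hBabs (x t)
    rw [intervalIntegral.integral_const_mul] at h2
    linarith
  -- limits
  have hJhatc : Continuous Jhat := by
    rw [continuous_iff_continuousAt]
    exact fun y => (hJd y).continuousAt
  have hphil : Tendsto (fun T => Jhat (x T)) atTop (𝓝 0) := by
    have := (hJhatc.tendsto 0).comp hxlim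
    simpa [hJ0, Function.comp_def] using this
  have hlimB : Tendsto (fun T => ∫ t in (0:ℝ)..T, B (x t)) atTop
      (𝓝 (0 - Jhat (x 0) + J)) := by
    have h1 : Tendsto (fun T => Jhat (x T) - Jhat (x 0) + ∫ t in (0:ℝ)..T, r (x t))
        atTop (𝓝 (0 - Jhat (x 0) + J)) :=
      Tendsto.add (hphil.sub tendsto_const_nhds) hJ
    apply h1.congr'
    filter_upwards [eventually_ge_atTop (0:ℝ)] with T hT
    exact (key T hT).symm
  have habs : Tendsto (fun T => |∫ t in (0:ℝ)..T, B (x t)|) atTop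
      (𝓝 |0 - Jhat (x 0) + J|) := hlimB.abs
  have hrhs : Tendsto (fun T => β * ∫ t in (0:ℝ)..T, r (x t)) atTop (𝓝 (β * J)) :=
    hJ.const_mul β
  have hfin : |0 - Jhat (x 0) + J| ≤ β * J := by
    apply le_of_tendsto_of_tendsto habs hrhs
    filter_upwards [eventually_ge_atTop (0:ℝ)] with T hT
    exact hbound T hT
  calc |Jhat (x 0) - J| = |0 - Jhat (x 0) + J| := by rw [abs_sub_comm]; ring_nf
  _ ≤ β * J := hfin
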